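/- For every n ≥ 1, every probability distribution p = (p_1, ..., p_n) with p_1 ≥ ... ≥ p_n > 0 and Σ p_i = 1, and every α ∈ (0, 1/2], the guessing entropy satisfies E[G(p)] ≥ (1/e)·2^{H(p) + p_n·h(α)/(1-α)} + 1/2 - p_n·α/(1-α). -/

import Mathlib

/-- Shannon entropy in bits. -/
noncomputable def shannonEntropy {n : ℕ} (p : Fin n → ℝ) : ℝ :=
  -∑ i, p i * Real.logb 2 (p i)

/-- Guessing entropy: expected number of guesses (indices counted from 1). -/
noncomputable def guessingEntropy {n : ℕ} (p : Fin n → ℝ) : ℝ :=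
  ∑ i : Fin n, (((i : ℕ) : ℝ) + 1) * p i

/-- Binary entropy function (in bits). -/
noncomputable def binaryEntropy (α : ℝ) : ℝ :=
  -α * Real.logb 2 α - (1 - α) * Real.logb 2 (1 - α)

open Real Finset

private lemma gibbs_term {w q : ℝ} (hw : 0 < w) (hq : 0 < q) :
    -(w * Real.log w) ≤ -(w * Real.log q) + q - w := by
  have h1 : Real.log (q / w) ≤ q / w - 1 := Real.log_le_sub_one_of_pos (by positivity)
  have h2 : Real.log (q / w) = Real.log q - Real.log w := Real.log_div hq.ne' hw.ne'
  rw [h2] at h1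
  have h4 := mul_le_mul_of_nonneg_left h1 hw.le
  have h5 : w * (q / w - 1) = q - w := by field_simp
  have h6 : w * (Real.log q - Real.log w) = w * Real.log q - w * Real.log w := by ring
  linarith

private lemma summable_k_geom {r : ℝ} (h0 : 0 ≤ r) (h1 : r < 1) :
    Summable (fun k : ℕ => (k : ℝ) * r ^ k) := by
  have h : ‖r‖ < 1 := by rwa [Real.norm_eq_abs, abs_of_nonneg h0]
  simpa using summable_pow_mul_geometric_of_norm_lt_one (R := ℝ) 1 h

private lemma summable_combo (A B C : ℝ) {r ρ : ℝ} (hr0 : 0 ≤ r) (hr1 : r < 1)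
    (hρ0 : 0 ≤ ρ) (hρ1 : ρ < 1) :
    Summable (fun k : ℕ => A * r ^ k + B * ((k:ℝ) * r ^ k) + C * ρ ^ k) :=
  (((summable_geometric_of_lt_one hr0 hr1).mul_left A).add
    ((summable_k_geom hr0 hr1).mul_left B)).add
    ((summable_geometric_of_lt_one hρ0 hρ1).mul_left C)

private lemma tsum_combo (A B C : ℝ) {r ρ : ℝ} (hr0 : 0 ≤ r) (hr1 : r < 1)
    (hρ0 : 0 ≤ ρ) (hρ1 : ρ < 1) :
    ∑' k : ℕ, (A * r ^ k + B * ((k:ℝ) * r ^ k) + C * ρ ^ k)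
      = A * (1 - r)⁻¹ + B * (r / (1 - r) ^ 2) + C * (1 - ρ)⁻¹ := by
  have hnr : ‖r‖ < 1 := by rwa [Real.norm_eq_abs, abs_of_nonneg hr0]
  have s1 := (summable_geometric_of_lt_one hr0 hr1).mul_left A
  have s2 := (summable_k_geom hr0 hr1).mul_left B
  have s3 := (summable_geometric_of_lt_one hρ0 hρ1).mul_left C
  rw [Summable.tsum_add (s1.add s2) s3, Summable.tsum_add s1 s2, tsum_mul_left, tsum_mul_left, tsum_mul_left,
    tsum_geometric_of_lt_one hr0 hr1, tsum_geometric_of_lt_one hρ0 hρ1,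
    tsum_coe_mul_geometric_of_norm_lt_one hnr]

set_option maxHeartbeats 1000000 in
theorem refined_rioul_limit (n : ℕ) (hn : 1 ≤ n) (p : Fin n → ℝ)
    (hdesc : ∀ i j : Fin n, i ≤ j → p j ≤ p i)
    (hpos : ∀ i, 0 < p i)
    (hsum : ∑ i, p i = 1)
    (α : ℝ) (hα0 : 0 < α) (hα : α ≤ 1/2) :
    guessingEntropy p ≥
      (1 / Real.exp 1) *
          (2 : ℝ) ^ (shannonEntropy p + p ⟨n - 1, by omega⟩ * binaryEntropy α / (1 - α)) +
        1 / 2 - p ⟨n - 1, by omega⟩ * α / (1 - α) := by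
  have hα1 : α < 1 := lt_of_le_of_lt hα (by norm_num)
  have h1α : (0:ℝ) < 1 - α := by linarith
  have hl2 : (0:ℝ) < Real.log 2 := Real.log_pos (by norm_num)
  have hmn : n - 1 < n := by omega
  set m := n - 1 with hmdef
  set lastI : Fin n := ⟨m, hmn⟩ with hlastI
  set pn := p lastI with hpn
  have hpn0 : 0 < pn := hpos _
  -- guessing entropy ≥ 1
  have hG1 : 1 ≤ guessingEntropy p := by
    rw [← hsum]
    unfold guessingEntropy
    refine Finset.sum_le_sum fun i _ => ?_
    have h1 : (0:ℝ) ≤ ((i:ℕ):ℝ) := Nat.cast_nonneg _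
    nlinarith [hpos i]
  set G := guessingEntropy p with hG
  set s := G + pn * α / (1 - α) - 1/2 with hsdef
  have hβpos : 0 < pn * α / (1 - α) := by positivity
  have hs : 0 < s := by rw [hsdef]; linarith
  -- key inequality
  have key : Real.log 2 * (shannonEntropy p + pn * binaryEntropy α / (1 - α))
      ≤ 1 + Real.log s := by
    have hsne : s ≠ 0 := hs.ne'
    have hsh : Real.log 2 * shannonEntropy p = -∑ i, p i * Real.log (p i) := by
      unfold shannonEntropy
      rw [mul_neg, neg_inj, Finset.mul_sum]
      refine Finset.sum_congr rfl fun i _ => ?_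
      rw [Real.logb]
      field_simp
    have hbe : Real.log 2 * binaryEntropy α
        = -(α * Real.log α) - (1 - α) * Real.log (1 - α) := by
      unfold binaryEntropy
      rw [Real.logb, Real.logb]
      field_simp
    have hexpand : Real.log 2 * (shannonEntropy p + pn * binaryEntropy α / (1 - α))
        = (-∑ i, p i * Real.log (p i))
          + pn * (-(α * Real.log α) - (1 - α) * Real.log (1 - α)) / (1 - α) := by
      rw [mul_add, hsh]
      have h9 : Real.log 2 * (pn * binaryEntropy α / (1 - α))
          = pn * (Real.log 2 * binaryEntropy α) / (1 - α) := by ring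
      rw [h9, hbe]
    rw [hexpand]
    -- the reference distribution
    set Q : ℕ → ℝ := fun j => s⁻¹ * Real.exp (-(((j:ℝ) + 1/2) / s)) with hQdef
    have hQpos : ∀ j : ℕ, 0 < Q j := by
      intro j; simp only [hQdef]; positivity
    have hlogQ : ∀ j : ℕ, Real.log (Q j) = -Real.log s - ((j:ℝ) + 1/2) / s := by
      intro j
      simp only [hQdef]
      rw [Real.log_mul (by positivity) (Real.exp_pos _).ne', Real.log_inv, Real.log_exp]
      ring
    have hρ0 : (0:ℝ) ≤ Real.exp (-s⁻¹) := (Real.exp_pos _).le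
    have hρneg : -s⁻¹ < 0 := by
      have h0 : (0:ℝ) < s⁻¹ := by positivity
      linarith
    have hρ1 : Real.exp (-s⁻¹) < 1 := by
      simpa using Real.exp_lt_exp.2 hρneg
    -- geometric forms of Q
    have hQmk : ∀ k : ℕ, Q (m + k)
        = (s⁻¹ * Real.exp (-((((m:ℕ):ℝ) + 1/2) / s))) * Real.exp (-s⁻¹) ^ k := by
      intro k
      simp only [hQdef]
      push_cast
      rw [show -((((m:ℕ):ℝ) + (k:ℝ) + 1/2) / s)
          = -((((m:ℕ):ℝ) + 1/2) / s) + (k:ℝ) * (-s⁻¹) by field_simp; ring]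
      rw [Real.exp_add, Real.exp_nat_mul]
      ring
    have hQj : ∀ j : ℕ, Q j = (s⁻¹ * Real.exp (-(2 * s)⁻¹)) * Real.exp (-s⁻¹) ^ j := by
      intro j
      simp only [hQdef]
      rw [show -(((j:ℝ) + 1/2) / s) = -(2*s)⁻¹ + (j:ℝ) * (-s⁻¹) by field_simp; ring]
      rw [Real.exp_add, Real.exp_nat_mul]
      ring
    -- tail pointwise identities
    have eL : ∀ k : ℕ,
        (-((1-α) * pn * Real.log ((1-α)*pn))) * α ^ k
          + (-((1-α) * pn * Real.log α)) * ((k:ℝ) * α ^ k) + 0 * Real.exp (-s⁻¹) ^ k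
        = -(((1-α) * pn * α ^ k) * Real.log ((1-α) * pn * α ^ k)) := by
      intro k
      conv_rhs => rw [Real.log_mul (by positivity : ((1-α) * pn) ≠ 0) (by positivity : (α:ℝ) ^ k ≠ 0), Real.log_pow]
      ring
    have eR : ∀ k : ℕ,
        ((1-α) * pn * (Real.log s + ((((m:ℕ):ℝ) + 1/2)) / s - 1)) * α ^ k
          + ((1-α) * pn * s⁻¹) * ((k:ℝ) * α ^ k)
          + (s⁻¹ * Real.exp (-((((m:ℕ):ℝ) + 1/2) / s))) * Real.exp (-s⁻¹) ^ k
        = -(((1-α) * pn * α ^ k) * Real.log (Q (m + k))) + Q (m + k)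
          - (1-α) * pn * α ^ k := by
      intro k
      rw [hlogQ (m + k), hQmk k]
      push_cast
      ring
    -- tail inequality
    have tailineq :
        (-((1-α) * pn * Real.log ((1-α)*pn))) * (1-α)⁻¹
          + (-((1-α) * pn * Real.log α)) * (α / (1-α)^2)
          + 0 * (1 - Real.exp (-s⁻¹))⁻¹
        ≤ ((1-α) * pn * (Real.log s + ((((m:ℕ):ℝ) + 1/2)) / s - 1)) * (1-α)⁻¹
          + ((1-α) * pn * s⁻¹) * (α / (1-α)^2)
          + (s⁻¹ * Real.exp (-((((m:ℕ):ℝ) + 1/2) / s))) * (1 - Real.exp (-s⁻¹))⁻¹ := by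
      rw [← tsum_combo _ _ _ hα0.le hα1 hρ0 hρ1, ← tsum_combo _ _ _ hα0.le hα1 hρ0 hρ1]
      refine Summable.tsum_le_tsum (fun k => ?_) (summable_combo _ _ _ hα0.le hα1 hρ0 hρ1)
        (summable_combo _ _ _ hα0.le hα1 hρ0 hρ1)
      rw [eL k, eR k]
      exact gibbs_term (by positivity) (hQpos _)
    -- closed forms
    have idL : (-((1-α) * pn * Real.log ((1-α)*pn))) * (1-α)⁻¹
          + (-((1-α) * pn * Real.log α)) * (α / (1-α)^2)
          + 0 * (1 - Real.exp (-s⁻¹))⁻¹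
        = -(pn * Real.log pn)
          + pn * (-(α * Real.log α) - (1 - α) * Real.log (1 - α)) / (1 - α) := by
      rw [Real.log_mul h1α.ne' hpn0.ne']
      field_simp
      ring
    have idR : ((1-α) * pn * (Real.log s + ((((m:ℕ):ℝ) + 1/2)) / s - 1)) * (1-α)⁻¹
          + ((1-α) * pn * s⁻¹) * (α / (1-α)^2)
        = pn * Real.log s + pn * ((((m:ℕ):ℝ) + 1/2) * s⁻¹) + pn * α / ((1-α) * s)
          - pn := by
      field_simp
      ring
    -- summability of Q and total bound
    have hQsummable : Summable Q := by
      have hfe : Q = fun j => (s⁻¹ * Real.exp (-(2 * s)⁻¹)) * Real.exp (-s⁻¹) ^ j :=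
        funext hQj
      rw [hfe]
      exact (summable_geometric_of_lt_one hρ0 hρ1).mul_left _
    have hQtail : ∑' k : ℕ, Q (k + m)
        = (s⁻¹ * Real.exp (-((((m:ℕ):ℝ) + 1/2) / s))) * (1 - Real.exp (-s⁻¹))⁻¹ := by
      have e : ∀ k : ℕ, Q (k + m)
          = (s⁻¹ * Real.exp (-((((m:ℕ):ℝ) + 1/2) / s))) * Real.exp (-s⁻¹) ^ k := by
        intro k; rw [Nat.add_comm]; exact hQmk k
      rw [tsum_congr e, tsum_mul_left, tsum_geometric_of_lt_one hρ0 hρ1]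
    have hQfull : ∑' j : ℕ, Q j
        = (s⁻¹ * Real.exp (-(2 * s)⁻¹)) * (1 - Real.exp (-s⁻¹))⁻¹ := by
      rw [tsum_congr hQj, tsum_mul_left, tsum_geometric_of_lt_one hρ0 hρ1]
    have hD : s⁻¹ * Real.exp (-(2 * s)⁻¹) ≤ 1 - Real.exp (-s⁻¹) := by
      have ht : (0:ℝ) < (2 * s)⁻¹ := by positivity
      have hsinh := Real.self_le_sinh_iff.2 ht.le
      rw [Real.sinh_eq] at hsinh
      have hmul : Real.exp ((2*s)⁻¹) * Real.exp (-(2*s)⁻¹) = 1 := by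
        rw [← Real.exp_add]; simp
      have hs2 : s⁻¹ = 2 * (2*s)⁻¹ := by
        rw [mul_inv]; ring
      have he2 : Real.exp (-s⁻¹) = Real.exp (-(2*s)⁻¹) * Real.exp (-(2*s)⁻¹) := by
        rw [← Real.exp_add]
        congr 1
        rw [hs2]; ring
      rw [he2, hs2]
      have h2t : 2 * (2*s)⁻¹ ≤ Real.exp ((2*s)⁻¹) - Real.exp (-(2*s)⁻¹) := by linarith
      have hp := mul_le_mul_of_nonneg_right h2t (Real.exp_pos (-(2*s)⁻¹)).le
      have hexp2 : (Real.exp ((2*s)⁻¹) - Real.exp (-(2*s)⁻¹)) * Real.exp (-(2*s)⁻¹)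
          = Real.exp ((2*s)⁻¹) * Real.exp (-(2*s)⁻¹)
            - Real.exp (-(2*s)⁻¹) * Real.exp (-(2*s)⁻¹) := by ring
      linarith [hp, hexp2, hmul]
    have hQle1 : ∑' j : ℕ, Q j ≤ 1 := by
      rw [hQfull]
      have h1ρ : (0:ℝ) < 1 - Real.exp (-s⁻¹) := by linarith
      calc s⁻¹ * Real.exp (-(2 * s)⁻¹) * (1 - Real.exp (-s⁻¹))⁻¹
          ≤ (1 - Real.exp (-s⁻¹)) * (1 - Real.exp (-s⁻¹))⁻¹ :=
            mul_le_mul_of_nonneg_right hD (inv_nonneg.2 h1ρ.le)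
        _ = 1 := mul_inv_cancel₀ h1ρ.ne'
    have hQsplit := Summable.sum_add_tsum_nat_add (f := Q) m hQsummable
    have hQtot : (∑ j ∈ Finset.range m, Q j)
        + (s⁻¹ * Real.exp (-((((m:ℕ):ℝ) + 1/2) / s))) * (1 - Real.exp (-s⁻¹))⁻¹
        ≤ 1 := by
      linarith [hQsplit, hQle1, hQtail]
    -- finite part
    have hfin : ∑ i ∈ Finset.univ.erase lastI, -(p i * Real.log (p i))
        ≤ ∑ i ∈ Finset.univ.erase lastI,
            (-(p i * Real.log (Q (i:ℕ))) + Q (i:ℕ) - p i) :=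
      Finset.sum_le_sum fun i _ => gibbs_term (hpos i) (hQpos (i:ℕ))
    have hsplitF : ∑ i ∈ Finset.univ.erase lastI, -(p i * Real.log (p i))
        = (∑ i, -(p i * Real.log (p i))) - -(pn * Real.log pn) := by
      rw [Finset.sum_erase_eq_sub (Finset.mem_univ lastI), hpn]
    have hGq : ∑ i ∈ Finset.univ.erase lastI,
            (-(p i * Real.log (Q (i:ℕ))) + Q (i:ℕ) - p i)
        = ∑ i ∈ Finset.univ.erase lastI,
            ((p i * Real.log s + p i * ((((i:ℕ):ℝ) + 1/2) * s⁻¹) - p i) + Q (i:ℕ)) :=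
      Finset.sum_congr rfl fun i _ => by rw [hlogQ (i:ℕ)]; ring
    have hsplitG : ∑ i ∈ Finset.univ.erase lastI,
            ((p i * Real.log s + p i * ((((i:ℕ):ℝ) + 1/2) * s⁻¹) - p i) + Q (i:ℕ))
        = (∑ i, ((p i * Real.log s + p i * ((((i:ℕ):ℝ) + 1/2) * s⁻¹) - p i) + Q (i:ℕ)))
          - ((pn * Real.log s + pn * ((((m:ℕ):ℝ) + 1/2) * s⁻¹) - pn) + Q m) := by
      rw [Finset.sum_erase_eq_sub (Finset.mem_univ lastI), hpn]
    have hGsum : (∑ i : Fin n, ((((i:ℕ):ℝ) + 1) * p i)) = G := by rw [hG]; rfl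
    have eQ : ∑ i : Fin n, Q (i : ℕ) = (∑ j ∈ Finset.range m, Q j) + Q m := by
      rw [Fin.sum_univ_eq_sum_range (fun j => Q j) n,
        show n = m + 1 from by omega, Finset.sum_range_succ]
    have eMid : ∑ i : Fin n, (p i * ((((i:ℕ):ℝ) + 1/2) * s⁻¹)) = (G - 1/2) * s⁻¹ := by
      have e1 : ∀ i : Fin n, p i * ((((i:ℕ):ℝ) + 1/2) * s⁻¹)
          = ((((i:ℕ):ℝ) + 1) * p i) * s⁻¹ - (p i) * ((1/2) * s⁻¹) := fun i => by ring
      rw [Finset.sum_congr rfl fun i _ => e1 i, Finset.sum_sub_distrib,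
        ← Finset.sum_mul, ← Finset.sum_mul, hGsum, hsum]
      ring
    have hsum1 : ∑ i : Fin n, ((p i * Real.log s + p i * ((((i:ℕ):ℝ) + 1/2) * s⁻¹) - p i) + Q (i:ℕ))
        = Real.log s + (G - 1/2) * s⁻¹ - 1 + ((∑ j ∈ Finset.range m, Q j) + Q m) := by
      rw [Finset.sum_add_distrib, Finset.sum_sub_distrib, Finset.sum_add_distrib,
        eQ, eMid, ← Finset.sum_mul, hsum, one_mul]
    have hs1 : (G - 1/2) * s⁻¹ + pn * α / ((1 - α) * s) = 1 := by
      have e : G - 1/2 = s - pn * α / (1 - α) := by rw [hsdef]; ring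
      rw [e]
      field_simp
      ring
    have hnegsum : ∑ i : Fin n, -(p i * Real.log (p i))
        = -∑ i : Fin n, p i * Real.log (p i) := Finset.sum_neg_distrib _
    linarith [hfin, hsplitF, hGq, hsplitG, hsum1, tailineq, idL, idR, hQtot, hs1, hnegsum]
  -- finish from key
  have h2X : (2:ℝ) ^ (shannonEntropy p + pn * binaryEntropy α / (1 - α))
      = Real.exp (Real.log 2 * (shannonEntropy p + pn * binaryEntropy α / (1 - α))) :=
    Real.rpow_def_of_pos (by norm_num) _
  have hle : Real.exp (Real.log 2 * (shannonEntropy p + pn * binaryEntropy α / (1 - α)))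
      ≤ Real.exp 1 * s := by
    have := Real.exp_le_exp.2 key
    rwa [Real.exp_add, Real.exp_log hs] at this
  rw [ge_iff_le, h2X]
  have hE : (0:ℝ) < Real.exp 1 := Real.exp_pos 1
  have h7 : (1 / Real.exp 1) * Real.exp (Real.log 2 *
      (shannonEntropy p + pn * binaryEntropy α / (1 - α))) ≤ s := by
    rw [div_mul_eq_mul_div, one_mul, div_le_iff₀ hE]
    calc Real.exp (Real.log 2 * (shannonEntropy p + pn * binaryEntropy α / (1 - α)))
        ≤ Real.exp 1 * s := hle
      _ = s * Real.exp 1 := by ring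
  rw [hsdef] at h7
  linarith
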